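/- (Theorem 1 of the paper.) Let g_1,…,g_K be vectors in E, f_1,…,f_K nonzero reals, γ > 0, and let g̃_1,…,g̃_K be produced by the AdaFed modified Gram–Schmidt recursion, assumed nonzero and pairwise orthogonal. Set S = Σ_{k=1}^K 1/‖g̃_k‖², λ*_k = 1/(‖g̃_k‖² · S), and d = Σ_{k=1}^K λ*_k g̃_k. Then for every k ∈ {1,…,K}: ⟨g_k, d⟩ = |f_k|^γ / S > 0. In particular −d is a common descent direction for all k (all directional derivatives ⟨g_k, d⟩ are positive), and ⟨g_k, d⟩ is proportional to |f_k|^γ. -/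

import Mathlib

open RealInnerProductSpace Finset

/-- Theorem 1 of the paper: with `gs` produced by the AdaFed modified
Gram–Schmidt recursion (assumed nonzero and pairwise orthogonal),
`S = ∑ 1/‖gs k‖²`, `λ* k = 1/(‖gs k‖² S)`, `d = ∑ λ* k • gs k`, one has
`⟪g k, d⟫ = |f k|^γ / S > 0` for every `k`. -/
theorem adafed_theorem1 {E : Type*} [NormedAddCommGroup E] [InnerProductSpace ℝ E]
    {K : ℕ} (g : Fin K → E) (f : Fin K → ℝ) (γ : ℝ) (hγ : 0 < γ)
    (hf : ∀ k, f k ≠ 0)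
    (gs : Fin K → E)
    (hgs : ∀ k, gs k ≠ 0)
    (horth : ∀ i j, i ≠ j → ⟪gs i, gs j⟫ = 0)
    (hdenom : ∀ k, |f k| ^ γ - ∑ i ∈ Finset.Iio k, ⟪g k, gs i⟫ / ⟪gs i, gs i⟫ ≠ 0)
    (hrec : ∀ k, gs k =
      (|f k| ^ γ - ∑ i ∈ Finset.Iio k, ⟪g k, gs i⟫ / ⟪gs i, gs i⟫)⁻¹ •
        (g k - ∑ i ∈ Finset.Iio k, (⟪g k, gs i⟫ / ⟪gs i, gs i⟫) • gs i))
    (S : ℝ) (hS : S = ∑ k, 1 / ‖gs k‖ ^ 2)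
    (lam : Fin K → ℝ) (hlam : ∀ k, lam k = 1 / (‖gs k‖ ^ 2 * S))
    (d : E) (hd : d = ∑ k, lam k • gs k) :
    ∀ k, ⟪g k, d⟫ = |f k| ^ γ / S ∧ 0 < ⟪g k, d⟫ := by
  intro k
  have hn : ∀ j, ‖gs j‖ ^ 2 ≠ 0 := fun j => pow_ne_zero 2 (norm_ne_zero_iff.mpr (hgs j))
  have hSpos : 0 < S := by
    rw [hS]
    apply Finset.sum_pos
    · intro i _
      have : 0 < ‖gs i‖ := norm_pos_iff.mpr (hgs i)
      positivity
    · exact ⟨k, Finset.mem_univ k⟩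
  have hdinner : ∀ j, ⟪gs j, d⟫ = 1 / S := by
    intro j
    rw [hd, inner_sum, Finset.sum_eq_single j]
    · rw [real_inner_smul_right, real_inner_self_eq_norm_sq, hlam]
      field_simp
      exact div_self (norm_ne_zero_iff.mpr (hgs j))
    · intro m _ hm
      rw [real_inner_smul_right, horth j m (Ne.symm hm), mul_zero]
    · intro h; exact absurd (Finset.mem_univ j) h
  set c := |f k| ^ γ - ∑ i ∈ Finset.Iio k, ⟪g k, gs i⟫ / ⟪gs i, gs i⟫ with hc
  have hgk : g k = c • gs k + ∑ i ∈ Finset.Iio k, (⟪g k, gs i⟫ / ⟪gs i, gs i⟫) • gs i := by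
    have h1 : c • gs k = g k - ∑ i ∈ Finset.Iio k, (⟪g k, gs i⟫ / ⟪gs i, gs i⟫) • gs i := by
      rw [hrec k, smul_smul, mul_inv_cancel₀ (hdenom k), one_smul]
    exact (sub_eq_iff_eq_add.mp h1.symm)
  have key : ⟪g k, d⟫ = |f k| ^ γ / S := by
    calc ⟪g k, d⟫ = ⟪c • gs k + ∑ i ∈ Finset.Iio k, (⟪g k, gs i⟫ / ⟪gs i, gs i⟫) • gs i, d⟫ := by
          rw [← hgk]
      _ = c * ⟪gs k, d⟫ + ∑ i ∈ Finset.Iio k, (⟪g k, gs i⟫ / ⟪gs i, gs i⟫) * ⟪gs i, d⟫ := by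
          rw [inner_add_left, real_inner_smul_left, sum_inner]
          simp only [real_inner_smul_left]
      _ = c * (1 / S) + (∑ i ∈ Finset.Iio k, ⟪g k, gs i⟫ / ⟪gs i, gs i⟫) * (1 / S) := by
          simp only [hdinner, Finset.sum_mul]
      _ = |f k| ^ γ / S := by
          rw [hc]; field_simp; ring
  refine ⟨key, ?_⟩
  rw [key]
  have : 0 < |f k| := abs_pos.mpr (hf k)
  positivity
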